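/- Every polyomino with n ≥ 2 cells can be partitioned into two nonempty sets of cells A and B, each of which is itself a polyomino (i.e., connected), such that (n-1)/4 ≤ |A| ≤ (3n+1)/4. -/

import Mathlib

/-- Grid adjacency of two cells of `ℤ × ℤ`. -/
def CellAdj (p q : ℤ × ℤ) : Prop :=
  (p.1 = q.1 ∧ (p.2 = q.2 + 1 ∨ q.2 = p.2 + 1)) ∨
  (p.2 = q.2 ∧ (p.1 = q.1 + 1 ∨ q.1 = p.1 + 1))

/-- A polyomino: a nonempty finite set of cells whose adjacency graph is connected. -/
def IsPolyomino (S : Finset (ℤ × ℤ)) : Prop :=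
  S.Nonempty ∧ ∀ p ∈ S, ∀ q ∈ S,
    Relation.ReflTransGen (fun a b => a ∈ S ∧ b ∈ S ∧ CellAdj a b) p q

open scoped Classical

namespace PolyoDecomp

open Relation Function

abbrev Cell := ℤ × ℤ

lemma cellAdj_symm {p q : Cell} (h : CellAdj p q) : CellAdj q p := by
  unfold CellAdj at *; tauto

/-- The four grid neighbours of a cell. -/
def nbrs (c : Cell) : Finset Cell :=
  {(c.1 + 1, c.2), (c.1 - 1, c.2), (c.1, c.2 + 1), (c.1, c.2 - 1)}

lemma mem_nbrs_of_adj {q c : Cell} (h : CellAdj q c) : q ∈ nbrs c := by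
  simp only [nbrs, Finset.mem_insert, Finset.mem_singleton, Prod.ext_iff]
  unfold CellAdj at h
  omega

lemma nbrs_card (c : Cell) : (nbrs c).card ≤ 4 := by
  unfold nbrs
  have h1 := Finset.card_insert_le (c.1 + 1, c.2)
    ({(c.1 - 1, c.2), (c.1, c.2 + 1), (c.1, c.2 - 1)} : Finset Cell)
  have h2 := Finset.card_insert_le (c.1 - 1, c.2)
    ({(c.1, c.2 + 1), (c.1, c.2 - 1)} : Finset Cell)
  have h3 := Finset.card_insert_le (c.1, c.2 + 1) ({(c.1, c.2 - 1)} : Finset Cell)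
  have h4 : ({(c.1, c.2 - 1)} : Finset Cell).card = 1 := Finset.card_singleton _
  omega

/-- `u` reaches `v` by iterating `f`. -/
def Reaches (f : Cell → Cell) (u v : Cell) : Prop := ∃ k, f^[k] u = v

lemma reaches_refl (f : Cell → Cell) (u : Cell) : Reaches f u u := ⟨0, rfl⟩

lemma reaches_step (f : Cell → Cell) (u : Cell) : Reaches f u (f u) := ⟨1, rfl⟩

lemma reaches_trans {f : Cell → Cell} {u v w : Cell}
    (h1 : Reaches f u v) (h2 : Reaches f v w) : Reaches f u w := by
  obtain ⟨i, hi⟩ := h1; obtain ⟨j, hj⟩ := h2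
  exact ⟨j + i, by rw [Function.iterate_add_apply, hi, hj]⟩

/-- A spanning tree of `S`, rooted at `r`, encoded by a parent map `f`. -/
structure TreeOn (S : Finset Cell) (r : Cell) (f : Cell → Cell) : Prop where
  root_mem : r ∈ S
  fix : f r = r
  mem : ∀ v ∈ S, f v ∈ S
  adj : ∀ v ∈ S, v ≠ r → CellAdj v (f v)
  reach : ∀ v ∈ S, Reaches f v r

variable {S : Finset Cell} {r : Cell} {f : Cell → Cell}

lemma TreeOn.chain_mem (h : TreeOn S r f) {v : Cell} (hv : v ∈ S) (k : ℕ) :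
    f^[k] v ∈ S := by
  induction k with
  | zero => exact hv
  | succ k ih => rw [Function.iterate_succ_apply']; exact h.mem _ ih

lemma reaches_root_of_fix (hfix : f r = r) {a : Cell} (ha : Reaches f r a) : a = r := by
  obtain ⟨k, hk⟩ := ha
  rw [Function.iterate_fixed hfix] at hk
  exact hk.symm

/-- Acyclicity: mutual reachability implies equality, for vertices that reach the root. -/
lemma reaches_antisymm (hfix : f r = r) {a b : Cell} (har : Reaches f a r)
    (hab : Reaches f a b) (hba : Reaches f b a) : a = b := by
  obtain ⟨i, hi⟩ := hab
  obtain ⟨j, hj⟩ := hba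
  rcases Nat.eq_zero_or_pos i with hi0 | hipos
  · subst hi0; exact hi.symm ▸ rfl
  obtain ⟨t, ht⟩ := har
  have hper : f^[j + i] a = a := by
    rw [Function.iterate_add_apply, hi, hj]
  have hperm : ∀ m, f^[m * (j + i)] a = a := by
    intro m
    induction m with
    | zero => simp
    | succ m ih =>
      have : (m + 1) * (j + i) = (j + i) + m * (j + i) := by ring
      rw [this, Function.iterate_add_apply, ih, hper]
  -- a = r
  have hN : t ≤ (t + 1) * (j + i) := by
    calc t ≤ (t + 1) * 1 := by omega
    _ ≤ (t + 1) * (j + i) := Nat.mul_le_mul_left _ (by omega)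
  have har' : a = r := by
    have h1 : f^[(t + 1) * (j + i)] a = a := hperm (t + 1)
    have h2 : (t + 1) * (j + i) = ((t + 1) * (j + i) - t) + t := by omega
    rw [h2, Function.iterate_add_apply, ht, Function.iterate_fixed hfix] at h1
    exact h1.symm
  have hbr : b = r := by rw [← hi, har', Function.iterate_fixed hfix]
  rw [har', hbr]

/-- The subtree of `v`: cells of `S` whose parent chain passes through `v`. -/
noncomputable def subtree (f : Cell → Cell) (S : Finset Cell) (v : Cell) : Finset Cell :=
  S.filter (fun u => Reaches f u v)

lemma mem_subtree {v u : Cell} : u ∈ subtree f S v ↔ u ∈ S ∧ Reaches f u v :=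
  Finset.mem_filter

/-- Size of a subtree. -/
noncomputable def sizeAux (f : Cell → Cell) (S : Finset Cell) (v : Cell) : ℕ :=
  (subtree f S v).card

lemma subtree_subset (f : Cell → Cell) (S : Finset Cell) (v : Cell) :
    subtree f S v ⊆ S := Finset.filter_subset _ _

lemma self_mem_subtree {v : Cell} (hv : v ∈ S) : v ∈ subtree f S v :=
  mem_subtree.2 ⟨hv, reaches_refl f v⟩

lemma subtree_root (h : TreeOn S r f) : subtree f S r = S := by
  apply Finset.filter_true_of_mem
  intro v hv; exact h.reach v hv

/-- Walking up the tree chain yields a path inside any set `A` containing the chain. -/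
lemma rtg_of_chain (h : TreeOn S r f) {A : Finset Cell} (hA : A ⊆ S) :
    ∀ (k : ℕ) (w : Cell), (∀ i ≤ k, f^[i] w ∈ A) →
      Relation.ReflTransGen (fun a b => a ∈ A ∧ b ∈ A ∧ CellAdj a b) w (f^[k] w) := by
  intro k
  induction k with
  | zero => intro w _; exact .refl
  | succ k ih =>
    intro w hw
    by_cases hwr : w = r
    · have hfx : f^[k + 1] w = w := by rw [hwr, Function.iterate_fixed h.fix]
      rw [hfx]
    · have h0 : w ∈ A := hw 0 (by omega)
      have h1 : f w ∈ A := by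
        have := hw 1 (by omega); simpa using this
      have step : Relation.ReflTransGen (fun a b => a ∈ A ∧ b ∈ A ∧ CellAdj a b) w (f w) :=
        Relation.ReflTransGen.single ⟨h0, h1, h.adj w (hA h0) hwr⟩
      have htail := ih (f w) (fun i hi => by
        rw [← Function.iterate_succ_apply]
        exact hw (i + 1) (by omega))
      rw [Function.iterate_succ_apply]
      exact step.trans htail

/-- A set in which everything connects to a hub is a polyomino. -/
lemma polyomino_of_hub {A : Finset Cell} {t : Cell} (ht : t ∈ A)
    (h : ∀ w ∈ A, Relation.ReflTransGen (fun a b => a ∈ A ∧ b ∈ A ∧ CellAdj a b) w t) :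
    IsPolyomino A := by
  refine ⟨⟨t, ht⟩, fun p hp q hq => ?_⟩
  have hsymm : Symmetric (fun a b : Cell => a ∈ A ∧ b ∈ A ∧ CellAdj a b) :=
    fun a b ⟨h1, h2, h3⟩ => ⟨h2, h1, cellAdj_symm h3⟩
  exact (h p hp).trans ((@Relation.ReflTransGen.symmetric _ _ ⟨hsymm⟩).symm _ _ (h q hq))

lemma subtree_polyomino (h : TreeOn S r f) {u : Cell} (hu : u ∈ S) :
    IsPolyomino (subtree f S u) := by
  apply polyomino_of_hub (self_mem_subtree hu)
  intro w hw
  obtain ⟨hwS, k, hk⟩ := mem_subtree.1 hw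
  have hchain : ∀ i ≤ k, f^[i] w ∈ subtree f S u := by
    intro i hi
    refine mem_subtree.2 ⟨h.chain_mem hwS i, ⟨k - i, ?_⟩⟩
    rw [← Function.iterate_add_apply]
    rw [Nat.sub_add_cancel hi]
    exact hk
  have := rtg_of_chain h (subtree_subset f S u) k w hchain
  rwa [hk] at this

lemma compl_subtree_polyomino (h : TreeOn S r f) {u : Cell} (hu : u ∈ S) (hur : u ≠ r) :
    IsPolyomino (S \ subtree f S u) := by
  have hrB : r ∈ S \ subtree f S u := by
    rw [Finset.mem_sdiff]
    refine ⟨h.root_mem, fun hmem => ?_⟩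
    exact hur (reaches_root_of_fix h.fix (mem_subtree.1 hmem).2)
  apply polyomino_of_hub hrB
  intro w hw
  obtain ⟨hwS, hwn⟩ := Finset.mem_sdiff.1 hw
  obtain ⟨k, hk⟩ := h.reach w hwS
  have hchain : ∀ i ≤ k, f^[i] w ∈ S \ subtree f S u := by
    intro i _
    rw [Finset.mem_sdiff]
    refine ⟨h.chain_mem hwS i, fun hmem => hwn ?_⟩
    obtain ⟨_, hr2⟩ := mem_subtree.1 hmem
    exact mem_subtree.2 ⟨hwS, reaches_trans ⟨i, rfl⟩ hr2⟩
  have := rtg_of_chain h (Finset.sdiff_subset) k w hchain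
  rwa [hk] at this

/-- Crossing lemma: a path from inside `T` to outside `T` crosses the boundary. -/
lemma crossing {R : Cell → Cell → Prop} {T : Finset Cell} {p q : Cell}
    (hp : p ∈ T) (h : Relation.ReflTransGen R p q) :
    q ∉ T → ∃ a b, a ∈ T ∧ b ∉ T ∧ R a b := by
  induction h with
  | refl => intro hq; exact absurd hp hq
  | @tail b c hpb hbc ih =>
    intro hq
    by_cases hbT : b ∈ T
    · exact ⟨b, c, hbT, hq, hbc⟩
    · exact ih hbT

/-- Every polyomino has a spanning tree. -/
lemma exists_tree (S : Finset Cell) (hS : IsPolyomino S) : ∃ r f, TreeOn S r f := by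
  obtain ⟨r, hr⟩ := hS.1
  suffices h : ∀ m (T : Finset Cell), T ⊆ S → r ∈ T → (∃ f, TreeOn T r f) →
      (S \ T).card ≤ m → ∃ f, TreeOn S r f by
    refine ⟨r, h (S \ {r}).card {r} (by simpa using hr) (Finset.mem_singleton_self r)
      ⟨id, ?_⟩ le_rfl⟩
    constructor
    · exact Finset.mem_singleton_self r
    · rfl
    · intro v hv; simpa using hv
    · intro v hv hvr; exact absurd (Finset.mem_singleton.1 hv) hvr
    · intro v hv; rw [Finset.mem_singleton.1 hv]; exact reaches_refl _ _
  intro m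
  induction m with
  | zero =>
    intro T hTS hrT hf hcard
    have hT : T = S := by
      apply Finset.Subset.antisymm hTS
      rw [← Finset.sdiff_eq_empty_iff_subset, ← Finset.card_eq_zero]
      omega
    rwa [hT] at hf
  | succ m ih =>
    intro T hTS hrT hf hcard
    obtain ⟨f, hf⟩ := hf
    by_cases hST : S ⊆ T
    · have hT : T = S := Finset.Subset.antisymm hTS hST
      exact ⟨f, hT ▸ hf⟩
    · obtain ⟨q, hqS, hqT⟩ := Finset.not_subset.1 hST
      have hpath := hS.2 r hr q hqS
      obtain ⟨a, b, haT, hbT, hbS⟩ := crossing hrT hpath hqT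
      obtain ⟨haS', hbS', hab⟩ := hbS
      set f' := Function.update f b a with hf'def
      have hbr : b ≠ r := fun h => hbT (h ▸ hrT)
      -- f' agrees with f on chains staying in T
      have hagree : ∀ v ∈ T, ∀ k, f'^[k] v = f^[k] v ∧ f^[k] v ∈ T := by
        intro v hv k
        induction k with
        | zero => exact ⟨rfl, hv⟩
        | succ k ihk =>
          obtain ⟨he, hm⟩ := ihk
          have hne : f^[k] v ≠ b := fun hc => hbT (hc ▸ hm)
          constructor
          · rw [Function.iterate_succ_apply', Function.iterate_succ_apply', he,
              hf'def, Function.update_of_ne hne]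
          · rw [Function.iterate_succ_apply']
            exact hf.mem _ hm
      have htree' : TreeOn (insert b T) r f' := by
        constructor
        · exact Finset.mem_insert_of_mem hrT
        · rw [hf'def, Function.update_of_ne (Ne.symm hbr), hf.fix]
        · intro v hv
          rcases Finset.mem_insert.1 hv with hvb | hvT
          · subst hvb
            rw [hf'def, Function.update_self]
            exact Finset.mem_insert_of_mem haT
          · have hne : v ≠ b := fun hc => hbT (hc ▸ hvT)
            rw [hf'def, Function.update_of_ne hne]
            exact Finset.mem_insert_of_mem (hf.mem v hvT)
        · intro v hv hvr
          rcases Finset.mem_insert.1 hv with hvb | hvT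
          · subst hvb
            rw [hf'def, Function.update_self]
            exact cellAdj_symm hab
          · have hne : v ≠ b := fun hc => hbT (hc ▸ hvT)
            rw [hf'def, Function.update_of_ne hne]
            exact hf.adj v hvT hvr
        · intro v hv
          rcases Finset.mem_insert.1 hv with hvb | hvT
          · subst hvb
            obtain ⟨k, hk⟩ := hf.reach a haT
            refine ⟨k + 1, ?_⟩
            rw [Function.iterate_succ_apply, hf'def, Function.update_self]
            rw [(hagree a haT k).1]
            exact hk
          · obtain ⟨k, hk⟩ := hf.reach v hvT
            exact ⟨k, (hagree v hvT k).1 ▸ hk⟩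
      refine ih (insert b T) (Finset.insert_subset hbS' hTS)
        (Finset.mem_insert_of_mem hrT) ⟨f', htree'⟩ ?_
      have hsub : S \ insert b T ⊆ S \ T :=
        Finset.sdiff_subset_sdiff (le_refl S) (Finset.subset_insert b T)
      have hlt : (S \ insert b T).card < (S \ T).card := by
        apply Finset.card_lt_card
        rw [Finset.ssubset_iff_of_subset hsub]
        exact ⟨b, Finset.mem_sdiff.2 ⟨hbS', hbT⟩, fun hc =>
          (Finset.mem_sdiff.1 hc).2 (Finset.mem_insert_self b T)⟩
      omega

/-- The key decomposition lemma, via the centroid of a spanning tree. -/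
lemma key (h : TreeOn S r f) (h2 : 2 ≤ S.card) :
    ∃ A : Finset Cell, A ⊆ S ∧ A.Nonempty ∧ (S \ A).Nonempty ∧
      IsPolyomino A ∧ IsPolyomino (S \ A) ∧
      S.card ≤ 4 * A.card + 1 ∧ 2 * A.card ≤ S.card := by
  set n := S.card with hn
  let sz : Cell → ℕ := fun v => sizeAux f S v
  have hsz : ∀ v, sz v = (subtree f S v).card := fun v => rfl
  -- the centroid: a minimal vertex whose subtree contains at least half the cells
  have hrQ : r ∈ S.filter (fun v => n ≤ 2 * sz v) := by
    refine Finset.mem_filter.2 ⟨h.root_mem, ?_⟩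
    have : sz r = n := by rw [hsz, subtree_root h]
    omega
  obtain ⟨c, hcQ, hcmin⟩ :=
    Finset.exists_min_image (S.filter (fun v => n ≤ 2 * sz v)) sz ⟨r, hrQ⟩
  obtain ⟨hcS, hcn⟩ := Finset.mem_filter.1 hcQ
  have hszc_le : sz c ≤ n := Finset.card_le_card (subtree_subset f S c)
  have hszc_pos : 1 ≤ sz c := Finset.card_pos.2 ⟨c, self_mem_subtree hcS⟩
  -- the children of the centroid
  set Ch := S.filter (fun u => f u = c ∧ u ≠ c) with hCh
  have hChS : ∀ u ∈ Ch, u ∈ S := fun u hu => (Finset.mem_filter.1 hu).1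
  have hChf : ∀ u ∈ Ch, f u = c := fun u hu => (Finset.mem_filter.1 hu).2.1
  have hChc : ∀ u ∈ Ch, u ≠ c := fun u hu => (Finset.mem_filter.1 hu).2.2
  have hch_ne_r : ∀ u ∈ Ch, u ≠ r := by
    intro u hu hur
    exact hChc u hu (by rw [← hChf u hu, hur, h.fix, ← hur])
  have hc_not_sub : ∀ u ∈ Ch, c ∉ subtree f S u := by
    intro u hu hmem
    refine hChc u hu (reaches_antisymm h.fix (h.reach u (hChS u hu))
      ⟨1, by simpa using hChf u hu⟩ (mem_subtree.1 hmem).2)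
  have hsub_ch : ∀ u ∈ Ch, subtree f S u ⊆ subtree f S c \ {c} := by
    intro u hu w hw
    obtain ⟨hwS, hwu⟩ := mem_subtree.1 hw
    refine Finset.mem_sdiff.2 ⟨mem_subtree.2 ⟨hwS,
      reaches_trans hwu ⟨1, by simpa using hChf u hu⟩⟩, ?_⟩
    intro hc'
    exact hc_not_sub u hu (Finset.mem_singleton.1 hc' ▸ hw)
  have hsz_ch : ∀ u ∈ Ch, 2 * sz u < n := by
    intro u hu
    by_contra hcon
    push_neg at hcon
    have huQ : u ∈ S.filter (fun v => n ≤ 2 * sz v) :=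
      Finset.mem_filter.2 ⟨hChS u hu, hcon⟩
    have h1 : sz c ≤ sz u := hcmin u huQ
    have h2' : sz u < sz c := by
      have hss : subtree f S u ⊆ subtree f S c \ {c} := hsub_ch u hu
      have := Finset.card_le_card hss
      have hd : (subtree f S c \ {c}).card = sz c - 1 := by
        rw [Finset.card_sdiff_of_subset (Finset.singleton_subset_iff.2 (self_mem_subtree hcS)), hsz]
        simp
      rw [hsz u, hsz c] at *
      omega
    omega
  -- the subtrees of the children partition the subtree of c minus c
  have hcover : subtree f S c \ {c} = Ch.biUnion (fun u => subtree f S u) := by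
    apply Finset.Subset.antisymm
    · intro w hw
      obtain ⟨hw1, hw2⟩ := Finset.mem_sdiff.1 hw
      obtain ⟨hwS, hreach⟩ := mem_subtree.1 hw1
      have hwc : w ≠ c := by simpa using hw2
      have hk0 : Nat.find hreach ≠ 0 := by
        intro h0
        exact hwc (by simpa [h0] using Nat.find_spec hreach)
      set k := Nat.find hreach with hkdef
      have hkspec : f^[k] w = c := Nat.find_spec hreach
      set u := f^[k - 1] w with hudef
      have hfu : f u = c := by
        rw [hudef, ← Function.iterate_succ_apply' f (k - 1) w,
          Nat.succ_eq_add_one, Nat.sub_add_cancel (by omega)]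
        exact hkspec
      have hunec : u ≠ c := by
        intro hc'
        exact Nat.find_min hreach (m := k - 1) (by omega) hc'
      have huS : u ∈ S := h.chain_mem hwS (k - 1)
      refine Finset.mem_biUnion.2 ⟨u, Finset.mem_filter.2 ⟨huS, hfu, hunec⟩,
        mem_subtree.2 ⟨hwS, ⟨k - 1, rfl⟩⟩⟩
    · intro w hw
      obtain ⟨u, hu, hwsub⟩ := Finset.mem_biUnion.1 hw
      exact hsub_ch u hu hwsub
  have hreach_ch : ∀ u1 ∈ Ch, ∀ u2 ∈ Ch, Reaches f u1 u2 → u1 = u2 := by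
    intro u1 hu1 u2 hu2 hr12
    obtain ⟨m, hm⟩ := hr12
    rcases Nat.eq_zero_or_pos m with hm0 | hmpos
    · rw [hm0] at hm; exact hm
    · exfalso
      apply hChc u2 hu2
      have hcu2 : Reaches f c u2 := by
        refine ⟨m - 1, ?_⟩
        rw [← hChf u1 hu1, ← Function.iterate_succ_apply f (m - 1) u1,
          Nat.succ_eq_add_one, Nat.sub_add_cancel (by omega)]
        exact hm
      exact (reaches_antisymm h.fix (h.reach c hcS)
        hcu2 ⟨1, by simpa using hChf u2 hu2⟩).symm
  have hdisj : ∀ u1 ∈ Ch, ∀ u2 ∈ Ch, u1 ≠ u2 →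
      Disjoint (subtree f S u1) (subtree f S u2) := by
    intro u1 hu1 u2 hu2 hne
    rw [Finset.disjoint_left]
    intro w hw1 hw2
    obtain ⟨hwS, k1, hk1⟩ := mem_subtree.1 hw1
    obtain ⟨_, k2, hk2⟩ := mem_subtree.1 hw2
    rcases le_total k1 k2 with hle | hle
    · refine hne (hreach_ch u1 hu1 u2 hu2 ⟨k2 - k1, ?_⟩)
      rw [← hk1, ← Function.iterate_add_apply, Nat.sub_add_cancel hle]
      exact hk2
    · refine hne (hreach_ch u2 hu2 u1 hu1 ⟨k1 - k2, ?_⟩).symm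
      rw [← hk2, ← Function.iterate_add_apply, Nat.sub_add_cancel hle]
      exact hk1
  -- size bookkeeping
  have hsum : (∑ u ∈ Ch, sz u) = sz c - 1 := by
    have e1 : (subtree f S c \ {c}).card = ∑ u ∈ Ch, sz u := by
      rw [hcover]; exact Finset.card_biUnion hdisj
    have e2 : (subtree f S c \ {c}).card = sz c - 1 := by
      rw [Finset.card_sdiff_of_subset (Finset.singleton_subset_iff.2 (self_mem_subtree hcS)), hsz]
      simp
    omega
  have hup_card : (S \ subtree f S c).card = n - sz c := by
    rw [Finset.card_sdiff_of_subset (subtree_subset f S c), hsz, hn]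
  -- degree bounds
  have hCh_sub_nbrs : Ch ⊆ nbrs c := by
    intro u hu
    have := h.adj u (hChS u hu) (hch_ne_r u hu)
    rw [hChf u hu] at this
    exact mem_nbrs_of_adj this
  have hCh4 : Ch.card ≤ 4 :=
    le_trans (Finset.card_le_card hCh_sub_nbrs) (nbrs_card c)
  -- helper producing the answer from a big-enough child
  have mkChild : ∀ u0 ∈ Ch, n ≤ 4 * sz u0 + 1 →
      ∃ A : Finset Cell, A ⊆ S ∧ A.Nonempty ∧ (S \ A).Nonempty ∧
        IsPolyomino A ∧ IsPolyomino (S \ A) ∧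
        n ≤ 4 * A.card + 1 ∧ 2 * A.card ≤ n := by
    intro u0 hu0 hbound
    have hu0S : u0 ∈ S := hChS u0 hu0
    exact ⟨subtree f S u0, subtree_subset f S u0, ⟨u0, self_mem_subtree hu0S⟩,
      ⟨c, Finset.mem_sdiff.2 ⟨hcS, hc_not_sub u0 hu0⟩⟩,
      subtree_polyomino h hu0S, compl_subtree_polyomino h hu0S (hch_ne_r u0 hu0),
      hbound, by have := hsz_ch u0 hu0; rw [hsz] at this; omega⟩
  by_cases hcr : c = r
  · -- centroid is the root: no "up" part
    have hsc : subtree f S c = S := by rw [hcr, subtree_root h]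
    have hszcn : sz c = n := by rw [hsz, hsc]
    have hChne : Ch.Nonempty := by
      rw [Finset.nonempty_iff_ne_empty]
      intro hemp
      rw [hemp, Finset.sum_empty] at hsum
      omega
    obtain ⟨u0, hu0Ch, hu0max⟩ := Finset.exists_max_image Ch sz hChne
    have hsum_le : (∑ u ∈ Ch, sz u) ≤ Ch.card * sz u0 := by
      have := Finset.sum_le_card_nsmul Ch sz (sz u0) (fun x hx => hu0max x hx)
      simpa [smul_eq_mul] using this
    refine mkChild u0 hu0Ch ?_
    have h4 : Ch.card * sz u0 ≤ 4 * sz u0 := Nat.mul_le_mul_right _ hCh4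
    omega
  · -- the "up" part is nonempty
    have hrUp : r ∈ S \ subtree f S c := by
      refine Finset.mem_sdiff.2 ⟨h.root_mem, fun hmem => ?_⟩
      exact hcr (reaches_root_of_fix h.fix (mem_subtree.1 hmem).2)
    have hCh3 : Ch.card ≤ 3 := by
      have hfc_ne : f c ≠ c := by
        intro hfc
        obtain ⟨t, ht⟩ := h.reach c hcS
        rw [Function.iterate_fixed hfc] at ht
        exact hcr ht
      have hfc_notCh : f c ∉ Ch := by
        intro hmem
        exact hfc_ne ((reaches_antisymm h.fix (h.reach c hcS)
          ⟨1, rfl⟩ ⟨1, by simpa using hChf _ hmem⟩).symm)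
      have hins : insert (f c) Ch ⊆ nbrs c := by
        intro x hx
        rcases Finset.mem_insert.1 hx with hx' | hx'
        · exact hx' ▸ mem_nbrs_of_adj (cellAdj_symm (h.adj c hcS hcr))
        · exact hCh_sub_nbrs hx'
      have := le_trans (Finset.card_le_card hins) (nbrs_card c)
      rw [Finset.card_insert_of_notMem hfc_notCh] at this
      omega
    by_cases hbig : n ≤ 4 * (S \ subtree f S c).card + 1
    · -- take the up part itself
      refine ⟨S \ subtree f S c, Finset.sdiff_subset, ⟨r, hrUp⟩, ?_, ?_, ?_, hbig, ?_⟩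
      · refine ⟨c, ?_⟩
        rw [sdiff_sdiff_eq_self (subtree_subset f S c)]
        exact self_mem_subtree hcS
      · exact compl_subtree_polyomino h hcS hcr
      · rw [sdiff_sdiff_eq_self (subtree_subset f S c)]
        exact subtree_polyomino h hcS
      · omega
    · -- take the biggest child subtree
      have hChne : Ch.Nonempty := by
        rw [Finset.nonempty_iff_ne_empty]
        intro hemp
        rw [hemp, Finset.sum_empty] at hsum
        omega
      obtain ⟨u0, hu0Ch, hu0max⟩ := Finset.exists_max_image Ch sz hChne
      have hsum_le : (∑ u ∈ Ch, sz u) ≤ Ch.card * sz u0 := by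
        have := Finset.sum_le_card_nsmul Ch sz (sz u0) (fun x hx => hu0max x hx)
        simpa [smul_eq_mul] using this
      refine mkChild u0 hu0Ch ?_
      have h3 : Ch.card * sz u0 ≤ 3 * sz u0 := Nat.mul_le_mul_right _ hCh3
      omega

end PolyoDecomp

theorem stmt19 (S : Finset (ℤ × ℤ)) (hS : IsPolyomino S)
    (n : ℕ) (hn : S.card = n) (h2 : 2 ≤ n) :
    ∃ A B : Finset (ℤ × ℤ), A.Nonempty ∧ B.Nonempty ∧ A ∪ B = S ∧ Disjoint A B ∧
      IsPolyomino A ∧ IsPolyomino B ∧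
      ((n : ℝ) - 1) / 4 ≤ (A.card : ℝ) ∧ (A.card : ℝ) ≤ (3 * (n : ℝ) + 1) / 4 := by
  obtain ⟨r, f, hT⟩ := PolyoDecomp.exists_tree S hS
  obtain ⟨A, hAS, hA1, hB1, hPA, hPB, hlow, hhigh⟩ := PolyoDecomp.key hT (hn ▸ h2)
  refine ⟨A, S \ A, hA1, hB1, Finset.union_sdiff_of_subset hAS,
    Finset.disjoint_sdiff, hPA, hPB, ?_, ?_⟩
  · have : (S.card : ℝ) ≤ 4 * A.card + 1 := by exact_mod_cast hlow
    rw [hn] at this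
    linarith
  · have : 2 * (A.card : ℝ) ≤ S.card := by exact_mod_cast hhigh
    rw [hn] at this
    have hn2 : (2 : ℝ) ≤ (n : ℝ) := by exact_mod_cast h2
    linarith
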